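/- A symmetric matrix W ∈ ℝ^{n×n} lies in the range of the map X ↦ BX' + XB' (X ∈ ℝ^{n×m}) if and only if Π_⊥ W Π_⊥ = 0, where Π_⊥ is the orthogonal projection onto the orthogonal complement of the range of B. -/

import Mathlib

open Matrix

lemma range_lemma {n m : ℕ}
    (B : Matrix (Fin n) (Fin m) ℝ) (P : Matrix (Fin n) (Fin n) ℝ)
    (hPsym : Pᵀ = P) (hPidem : P * P = P)
    (hPrange : ∀ x : Fin n → ℝ,
      x ∈ LinearMap.range P.mulVecLin ↔ ∀ u : Fin m → ℝ, x ⬝ᵥ B.mulVec u = 0) :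
    ∃ C : Matrix (Fin m) (Fin n) ℝ, B * C = 1 - P := by
  classical
  let K : Submodule ℝ (EuclideanSpace ℝ (Fin n)) :=
    (LinearMap.range (B.mulVecLin : (Fin m → ℝ) →ₗ[ℝ] (Fin n → ℝ))).map
      ((WithLp.linearEquiv 2 ℝ (Fin n → ℝ)).symm : (Fin n → ℝ) →ₗ[ℝ] EuclideanSpace ℝ (Fin n))
  have key : ∀ (a b : Fin n → ℝ), (P *ᵥ a) ⬝ᵥ ((1 - P) *ᵥ b) = 0 := by
    intro a b
    rw [dotProduct_mulVec, ← mulVec_transpose, mulVec_mulVec]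
    have h0 : (1 - P)ᵀ * P = 0 := by
      rw [transpose_sub, transpose_one, hPsym, sub_mul, one_mul, hPidem, sub_self]
    rw [h0]
    simp
  have hcol : ∀ j : Fin n, ∃ u : Fin m → ℝ,
      B.mulVec u = (1 - P).mulVec (Pi.single j 1) := by
    intro j
    set y : EuclideanSpace ℝ (Fin n) := WithLp.toLp 2 ((1 - P).mulVec (Pi.single j 1)) with hy
    have hyK : y ∈ K := by
      rw [← Submodule.orthogonal_orthogonal K]
      intro v hv
      have hvP : v.ofLp ∈ LinearMap.range P.mulVecLin := by
        rw [hPrange]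
        intro u
        have := hv (WithLp.toLp 2 (B.mulVec u)) ⟨B.mulVec u, ⟨u, rfl⟩, rfl⟩
        simpa [PiLp.inner_apply, RCLike.inner_apply, dotProduct, mul_comm] using this
      obtain ⟨z, hz⟩ := hvP
      have hz' : WithLp.toLp 2 (P *ᵥ z) = v := by
        rw [show P *ᵥ z = v.ofLp from hz]
      show (inner ℝ v y : ℝ) = 0
      rw [← hz']
      have hk := key z (Pi.single j 1)
      simpa [PiLp.inner_apply, RCLike.inner_apply, dotProduct, hy, mul_comm] using hk
    obtain ⟨x, ⟨u, rfl⟩, hu⟩ := hyK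
    exact ⟨u, congrArg WithLp.ofLp hu⟩
  choose u hu using hcol
  refine ⟨Matrix.of fun k j => u j k, ?_⟩
  ext i j
  rw [Matrix.mul_apply]
  have h := congrFun (hu j) i
  simp only [Matrix.mulVec, dotProduct] at h
  rw [show (∑ k, B i k * (Matrix.of fun k j => u j k) k j) = ∑ k, B i k * u j k from rfl, h]
  simp [Pi.single_apply, mul_ite]

theorem stmt_7 {n m : ℕ}
    (B : Matrix (Fin n) (Fin m) ℝ) (W P : Matrix (Fin n) (Fin n) ℝ)
    (hW : Wᵀ = W)
    (hPsym : Pᵀ = P) (hPidem : P * P = P)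
    (hPrange : ∀ x : Fin n → ℝ,
      x ∈ LinearMap.range P.mulVecLin ↔ ∀ u : Fin m → ℝ, x ⬝ᵥ B.mulVec u = 0) :
    (∃ X : Matrix (Fin n) (Fin m) ℝ, W = B * Xᵀ + X * Bᵀ) ↔ P * W * P = 0 := by
  classical
  have hPB : P * B = 0 := by
    ext i j
    have hx : (fun k => P i k) ∈ LinearMap.range P.mulVecLin := by
      refine ⟨Pi.single i 1, ?_⟩
      ext k
      have hrfl : P.mulVecLin (Pi.single i 1) k = ∑ l, P k l * (Pi.single i 1 : Fin n → ℝ) l := rfl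
      rw [hrfl]
      simp only [Pi.single_apply, mul_ite, mul_one, mul_zero, Finset.sum_ite_eq',
        Finset.mem_univ, if_true]
      conv_lhs => rw [← hPsym]
      exact Matrix.transpose_apply P k i
    have := (hPrange _).mp hx (Pi.single j 1)
    simpa [Matrix.mul_apply, dotProduct, Matrix.mulVec, Pi.single_apply, mul_ite] using this
  have hBP : Bᵀ * P = 0 := by
    have := congrArg Matrix.transpose hPB
    simpa [Matrix.transpose_mul, hPsym] using this
  constructor
  · rintro ⟨X, rfl⟩
    have h1 : P * (B * Xᵀ) * P = 0 := by
      rw [← Matrix.mul_assoc, hPB]; simp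
    have h2 : P * (X * Bᵀ) * P = 0 := by
      rw [Matrix.mul_assoc, Matrix.mul_assoc, hBP]; simp [← Matrix.mul_assoc]
    rw [Matrix.mul_add, Matrix.add_mul, h1, h2, add_zero]
  · intro h
    obtain ⟨C, hC⟩ := range_lemma B P hPsym hPidem hPrange
    have hCB : Cᵀ * Bᵀ = 1 - P := by
      rw [← Matrix.transpose_mul, hC, transpose_sub, transpose_one, hPsym]
    refine ⟨W * Cᵀ - (2⁻¹ : ℝ) • ((1 - P) * W * Cᵀ), ?_⟩
    have hXT : (W * Cᵀ - (2⁻¹:ℝ) • ((1-P)*W*Cᵀ))ᵀ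
        = C * W - (2⁻¹:ℝ) • (C * W * (1-P)) := by
      simp only [transpose_sub, transpose_smul, Matrix.transpose_mul, hW,
        transpose_sub, transpose_one, hPsym, Matrix.mul_assoc, transpose_transpose]
    rw [hXT]
    have hT : (1-P)*W*(1-P) = W - W*P - P*W := by
      rw [Matrix.sub_mul, Matrix.one_mul, Matrix.sub_mul, Matrix.mul_sub,
        Matrix.mul_one, Matrix.mul_sub, Matrix.mul_one, h, sub_zero]
      try abel
    rw [Matrix.mul_sub, Matrix.sub_mul, Matrix.mul_smul, Matrix.smul_mul]
    rw [← Matrix.mul_assoc B C W, hC]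
    rw [show B * (C * W * (1-P)) = (1-P) * W * (1-P) by
      rw [← Matrix.mul_assoc, ← Matrix.mul_assoc, hC]]
    rw [Matrix.mul_assoc W Cᵀ Bᵀ, hCB]
    rw [show (1-P)*W*Cᵀ*Bᵀ = (1-P)*W*(1-P) by
      rw [Matrix.mul_assoc ((1-P)*W) Cᵀ Bᵀ, hCB]]
    rw [hT, Matrix.sub_mul, Matrix.one_mul, Matrix.mul_sub, Matrix.mul_one]
    module
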